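/- For every γ > 0, the function f_γ is convex and differentiable on ℝ^p with gradient ∇f_γ(x) = A·u*_γ(Aᵀx), and ∇f_γ is Lipschitz continuous with constant ‖A‖²/γ, where ‖A‖ is the spectral norm of A. -/

import Mathlib

open scoped RealInnerProductSpace BigOperators

lemma aux_le_of_mul_lt_one {C D : ℝ} (h : ∀ a : ℝ, 0 < a → a < 1 → a * C ≤ D) : C ≤ D := by
  have ht : Filter.Tendsto (fun a : ℝ => a * C) (nhdsWithin 1 (Set.Iio 1)) (nhds C) := by
    have : Filter.Tendsto (fun a : ℝ => a * C) (nhds 1) (nhds (1 * C)) :=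
      (continuous_id.mul continuous_const).tendsto 1
    simpa using this.mono_left nhdsWithin_le_nhds
  refine le_of_tendsto ht ?_
  have hmem : Set.Ioo (0:ℝ) 1 ∈ nhdsWithin (1:ℝ) (Set.Iio 1) := by
    refine mem_nhdsWithin.mpr ⟨Set.Ioi 0, isOpen_Ioi, by norm_num, ?_⟩
    rintro x ⟨hx0, hx1⟩
    exact ⟨hx0, hx1⟩
  filter_upwards [hmem] with a ha
  exact h a ha.1 ha.2

lemma aux_hasGradientAt {F : Type*} [NormedAddCommGroup F] [InnerProductSpace ℝ F]
    [CompleteSpace F] (f : F → ℝ) (x g : F) (C : ℝ)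
    (h : ∀ y, |f y - f x - ⟪g, y - x⟫| ≤ C * ‖y - x‖ ^ 2) :
    HasGradientAt f g x := by
  set C' := |C| with hC'
  have hC0 : 0 ≤ C' := abs_nonneg C
  have h' : ∀ y, |f y - f x - ⟪g, y - x⟫| ≤ C' * ‖y - x‖ ^ 2 := fun y =>
    (h y).trans (by nlinarith [le_abs_self C, sq_nonneg ‖y - x‖])
  rw [hasGradientAt_iff_isLittleO, Asymptotics.isLittleO_iff]
  intro c hc
  have hball : Metric.ball x (c / (C' + 1)) ∈ nhds x :=
    Metric.ball_mem_nhds x (by positivity)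
  filter_upwards [hball] with y hy
  have hdist : ‖y - x‖ < c / (C' + 1) := by
    rw [Metric.mem_ball, dist_eq_norm] at hy; exact hy
  have h1 : ‖f y - f x - ⟪g, y - x⟫‖ ≤ C' * ‖y - x‖ ^ 2 := by
    rw [Real.norm_eq_abs]; exact h' y
  have h2 : C' * ‖y - x‖ ^ 2 ≤ c * ‖y - x‖ := by
    have hn : 0 ≤ ‖y - x‖ := norm_nonneg _
    have hcc : 0 < C' + 1 := by linarith
    have key : C' * ‖y - x‖ ≤ c := by
      have h3 : C' * ‖y - x‖ ≤ C' * (c / (C' + 1)) := by nlinarith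
      refine h3.trans ?_
      rw [mul_div_assoc'] at *
      rw [div_le_iff₀ hcc]
      nlinarith
    nlinarith
  exact h1.trans h2

set_option maxHeartbeats 1000000 in
theorem stmt_5
    {n : ℕ} (hn : 1 ≤ n)
    (U : Set (EuclideanSpace ℝ (Fin n)))
    (hUne : U.Nonempty) (hUcl : IsClosed U) (hUcx : Convex ℝ U)
    (φ : EuclideanSpace ℝ (Fin n) → EReal)
    (hφbot : ∀ v, φ v ≠ ⊥)
    (hφlsc : LowerSemicontinuous φ)
    (hφcx : ∀ v w : EuclideanSpace ℝ (Fin n), ∀ a c : ℝ, 0 ≤ a → 0 ≤ c → a + c = 1 →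
      φ (a • v + c • w) ≤ (a : EReal) * φ v + (c : EReal) * φ w)
    (hφdom : ∃ v ∈ U, φ v ≠ ⊤)
    (b : EuclideanSpace ℝ (Fin n) → ℝ)
    (hbcont : Continuous b)
    (hbsc : StrongConvexOn U 1 b)
    (ustar : ℝ → EuclideanSpace ℝ (Fin n) → EuclideanSpace ℝ (Fin n))
    (humem : ∀ γ > (0:ℝ), ∀ z, ustar γ z ∈ U)
    (hufin : ∀ γ > (0:ℝ), ∀ z, φ (ustar γ z) ≠ ⊤)
    (humax : ∀ γ > (0:ℝ), ∀ z, ∀ v ∈ U,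
      (⟪z, v⟫ : EReal) - φ v - ((γ * b v : ℝ) : EReal)
        ≤ (⟪z, ustar γ z⟫ : EReal) - φ (ustar γ z) - ((γ * b (ustar γ z) : ℝ) : EReal))
    (φs : ℝ → EuclideanSpace ℝ (Fin n) → ℝ)
    (hφs : ∀ γ z, φs γ z = ⟪z, ustar γ z⟫ - (φ (ustar γ z)).toReal - γ * b (ustar γ z))
    {p : ℕ} (hp : 1 ≤ p)
    (A : EuclideanSpace ℝ (Fin n) →L[ℝ] EuclideanSpace ℝ (Fin p))
    :
    ∀ γ > (0:ℝ),
      ConvexOn ℝ Set.univ (fun x : EuclideanSpace ℝ (Fin p) => φs γ ((ContinuousLinearMap.adjoint A) x)) ∧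
      (∀ x : EuclideanSpace ℝ (Fin p),
        HasGradientAt (fun x => φs γ ((ContinuousLinearMap.adjoint A) x)) (A (ustar γ ((ContinuousLinearMap.adjoint A) x))) x) ∧
      LipschitzWith (Real.toNNReal (‖A‖^2 / γ))
        (fun x : EuclideanSpace ℝ (Fin p) => A (ustar γ ((ContinuousLinearMap.adjoint A) x))) := by
  intro γ hγ
  set B := ContinuousLinearMap.adjoint A with hB
  set ψ : EuclideanSpace ℝ (Fin n) → ℝ := fun v => (φ v).toReal with hψdef
  have hψcoe : ∀ v, φ v ≠ ⊤ → ((ψ v : ℝ) : EReal) = φ v := fun v hv =>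
    EReal.coe_toReal hv (hφbot v)
  -- real form of the maximality
  have hmaxR : ∀ z v, v ∈ U → φ v ≠ ⊤ →
      ⟪z, v⟫ - ψ v - γ * b v ≤ ⟪z, ustar γ z⟫ - ψ (ustar γ z) - γ * b (ustar γ z) := by
    intro z v hv hvt
    have h1 := humax γ hγ z v hv
    rw [← hψcoe v hvt, ← hψcoe _ (hufin γ hγ z)] at h1
    rw [← EReal.coe_sub, ← EReal.coe_sub, ← EReal.coe_sub, ← EReal.coe_sub] at h1
    exact_mod_cast h1
  -- convexity of the domain and of ψ on it
  have hdomcx : ∀ v w : EuclideanSpace ℝ (Fin n), ∀ a c : ℝ, φ v ≠ ⊤ → φ w ≠ ⊤ →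
      0 ≤ a → 0 ≤ c → a + c = 1 →
      φ (a • v + c • w) ≠ ⊤ ∧ ψ (a • v + c • w) ≤ a * ψ v + c * ψ w := by
    intro v w a c hvt hwt ha hc hac
    have h1 := hφcx v w a c ha hc hac
    rw [← hψcoe v hvt, ← hψcoe w hwt, ← EReal.coe_mul, ← EReal.coe_mul, ← EReal.coe_add] at h1
    refine ⟨ne_top_of_le_ne_top (EReal.coe_ne_top _) h1, ?_⟩
    have h2 := EReal.toReal_le_toReal h1 (hφbot _) (EReal.coe_ne_top _)
    rw [EReal.toReal_coe] at h2; exact h2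
  -- strong convexity estimate
  have hstrong : ∀ z v, v ∈ U → φ v ≠ ⊤ →
      γ / 2 * ‖v - ustar γ z‖ ^ 2 ≤
        (γ * b v + ψ v - ⟪z, v⟫) - (γ * b (ustar γ z) + ψ (ustar γ z) - ⟪z, ustar γ z⟫) := by
    intro z v hv hvt
    set u := ustar γ z with hu
    have humem' : u ∈ U := humem γ hγ z
    have hut : φ u ≠ ⊤ := hufin γ hγ z
    apply aux_le_of_mul_lt_one
    intro a ha0 ha1
    have hc0 : (0:ℝ) < 1 - a := by linarith
    set w : EuclideanSpace ℝ (Fin n) := a • u + (1 - a) • v with hw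
    have hwU : w ∈ U := hUcx humem' hv ha0.le hc0.le (by ring)
    have hdc := hdomcx u v a (1 - a) hut hvt ha0.le hc0.le (by ring)
    have hwt : φ w ≠ ⊤ := hdc.1
    have hψw : ψ w ≤ a * ψ u + (1 - a) * ψ v := hdc.2
    have hbw : b w ≤ a * b u + (1 - a) * b v - a * (1 - a) * ((1:ℝ) / 2 * ‖u - v‖ ^ 2) := by
      have := hbsc.2 humem' hv ha0.le hc0.le (by ring)
      simpa [smul_eq_mul] using this
    have hbw' : γ * b w ≤ γ * (a * b u + (1 - a) * b v - a * (1 - a) * ((1:ℝ) / 2 * ‖u - v‖ ^ 2)) :=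
      mul_le_mul_of_nonneg_left hbw hγ.le
    have hinw : ⟪z, w⟫ = a * ⟪z, u⟫ + (1 - a) * ⟪z, v⟫ := by
      rw [hw, inner_add_right, real_inner_smul_right, real_inner_smul_right]
    have hmw := hmaxR z w hwU hwt
    rw [← hu, hinw] at hmw
    have hnorm : ‖v - u‖ = ‖u - v‖ := norm_sub_rev _ _
    have key : (1 - a) * (a * (γ / 2 * ‖v - u‖ ^ 2)) ≤
        (1 - a) * ((γ * b v + ψ v - ⟪z, v⟫) - (γ * b u + ψ u - ⟪z, u⟫)) := by
      rw [hnorm]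
      nlinarith [hmw, hbw', hψw]
    exact le_of_mul_le_mul_left key hc0
  -- Lipschitz continuity of the maximizer
  have hulip : ∀ z1 z2, ‖ustar γ z1 - ustar γ z2‖ ≤ ‖z1 - z2‖ / γ := by
    intro z1 z2
    set u1 := ustar γ z1 with hu1
    set u2 := ustar γ z2 with hu2
    have h1 := hstrong z1 u2 (humem γ hγ z2) (hufin γ hγ z2)
    have h2 := hstrong z2 u1 (humem γ hγ z1) (hufin γ hγ z1)
    rw [← hu1] at h1
    rw [← hu2] at h2
    have hnorm : ‖u2 - u1‖ = ‖u1 - u2‖ := norm_sub_rev _ _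
    rw [hnorm] at h1
    have hin : ⟪z1, u1⟫ - ⟪z1, u2⟫ + (⟪z2, u2⟫ - ⟪z2, u1⟫) = ⟪z1 - z2, u1 - u2⟫ := by
      rw [inner_sub_left, inner_sub_right, inner_sub_right]; ring
    have hcs : ⟪z1 - z2, u1 - u2⟫ ≤ ‖z1 - z2‖ * ‖u1 - u2‖ := real_inner_le_norm _ _
    have hsum : γ * ‖u1 - u2‖ ^ 2 ≤ ‖z1 - z2‖ * ‖u1 - u2‖ := by linarith [h1, h2, hin, hcs]
    rcases eq_or_lt_of_le (norm_nonneg (u1 - u2)) with h0 | h0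
    · rw [← h0]; positivity
    · rw [le_div_iff₀ hγ]; nlinarith
  -- two-sided bound giving the gradient of φs γ
  have hsand : ∀ z z', |φs γ z' - φs γ z - ⟪z' - z, ustar γ z⟫| ≤ ‖z' - z‖ ^ 2 / γ := by
    intro z z'
    set u := ustar γ z with hu
    set u' := ustar γ z' with hu'
    have hL : φs γ z + ⟪z' - z, u⟫ ≤ φs γ z' := by
      have h1 := hmaxR z' u (humem γ hγ z) (hufin γ hγ z)
      rw [← hu'] at h1
      rw [hφs γ z, hφs γ z', ← hu, ← hu']
      have : ⟪z' - z, u⟫ = ⟪z', u⟫ - ⟪z, u⟫ := by rw [inner_sub_left]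
      simp only [hψdef] at h1 ⊢
      linarith
    have hU : φs γ z' ≤ φs γ z + ⟪z' - z, u'⟫ := by
      have h1 := hmaxR z u' (humem γ hγ z') (hufin γ hγ z')
      rw [← hu] at h1
      rw [hφs γ z, hφs γ z', ← hu, ← hu']
      have : ⟪z' - z, u'⟫ = ⟪z', u'⟫ - ⟪z, u'⟫ := by rw [inner_sub_left]
      simp only [hψdef] at h1 ⊢
      linarith
    have hd : ⟪z' - z, u'⟫ - ⟪z' - z, u⟫ = ⟪z' - z, u' - u⟫ := by
      rw [inner_sub_right]
    have hcs : ⟪z' - z, u' - u⟫ ≤ ‖z' - z‖ * ‖u' - u‖ := real_inner_le_norm _ _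
    have hlip : ‖u' - u‖ ≤ ‖z' - z‖ / γ := hulip z' z
    have hup : ⟪z' - z, u' - u⟫ ≤ ‖z' - z‖ ^ 2 / γ := by
      calc ⟪z' - z, u' - u⟫ ≤ ‖z' - z‖ * ‖u' - u‖ := hcs
        _ ≤ ‖z' - z‖ * (‖z' - z‖ / γ) := by
            exact mul_le_mul_of_nonneg_left hlip (norm_nonneg _)
        _ = ‖z' - z‖ ^ 2 / γ := by ring
    rw [abs_le]
    constructor
    · have hnn : (0:ℝ) ≤ ‖z' - z‖ ^ 2 / γ := by positivity
      linarith
    · linarith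
  -- norms of A and its adjoint
  have hBnorm : ‖B‖ = ‖A‖ := by
    rw [hB]
    exact ContinuousLinearMap.adjoint.norm_map A
  have hBle : ∀ x : EuclideanSpace ℝ (Fin p), ‖B x‖ ≤ ‖A‖ * ‖x‖ := by
    intro x
    calc ‖B x‖ ≤ ‖B‖ * ‖x‖ := B.le_opNorm x
      _ = ‖A‖ * ‖x‖ := by rw [hBnorm]
  refine ⟨⟨convex_univ, ?_⟩, ?_, ?_⟩
  · -- convexity
    intro x _ y _ a c ha hc hac
    simp only [smul_eq_mul]
    have hBlin : B (a • x + c • y) = a • B x + c • B y := by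
      simp [map_add, map_smul]
    set z : EuclideanSpace ℝ (Fin n) := a • B x + c • B y with hz
    set w := ustar γ z with hwdef
    have hwU : w ∈ U := humem γ hγ z
    have hwt : φ w ≠ ⊤ := hufin γ hγ z
    have hzin : ⟪z, w⟫ = a * ⟪B x, w⟫ + c * ⟪B y, w⟫ := by
      rw [hz, inner_add_left, real_inner_smul_left, real_inner_smul_left]
    have h1 : ⟪B x, w⟫ - ψ w - γ * b w ≤ φs γ (B x) := by
      rw [hφs γ (B x)]
      exact hmaxR (B x) w hwU hwt
    have h2 : ⟪B y, w⟫ - ψ w - γ * b w ≤ φs γ (B y) := by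
      rw [hφs γ (B y)]
      exact hmaxR (B y) w hwU hwt
    have h1' := mul_le_mul_of_nonneg_left h1 ha
    have h2' := mul_le_mul_of_nonneg_left h2 hc
    have hval : φs γ (B (a • x + c • y)) = ⟪z, w⟫ - ψ w - γ * b w := by
      rw [hBlin, hφs γ z, ← hwdef]
    have hsplit : ⟪z, w⟫ - ψ w - γ * b w =
        a * (⟪B x, w⟫ - ψ w - γ * b w) + c * (⟪B y, w⟫ - ψ w - γ * b w) := by
      linear_combination hzin + (ψ w + γ * b w) * hac
    rw [hval, hsplit]
    linarith [h1', h2']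
  · -- gradient
    intro x
    apply aux_hasGradientAt _ x _ (‖A‖ ^ 2 / γ)
    intro y
    set u := ustar γ (B x) with hu
    have hadj : ⟪A u, y - x⟫ = ⟪B (y - x), u⟫ := by
      rw [real_inner_comm]
      exact (ContinuousLinearMap.adjoint_inner_left A u (y - x)).symm
    have hBsub : B y - B x = B (y - x) := (map_sub B y x).symm
    have h1 := hsand (B x) (B y)
    rw [← hu, hBsub] at h1
    have hb2 : ‖B (y - x)‖ ^ 2 ≤ ‖A‖ ^ 2 * ‖y - x‖ ^ 2 := by
      nlinarith [hBle (y - x), norm_nonneg (B (y - x)), norm_nonneg (y - x),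
        mul_nonneg (norm_nonneg A) (norm_nonneg (y - x))]
    have h2 : ‖B (y - x)‖ ^ 2 / γ ≤ ‖A‖ ^ 2 / γ * ‖y - x‖ ^ 2 := by
      rw [div_mul_eq_mul_div]
      gcongr
    calc |φs γ (B y) - φs γ (B x) - ⟪A u, y - x⟫|
        = |φs γ (B y) - φs γ (B x) - ⟪B (y - x), u⟫| := by rw [hadj]
      _ ≤ ‖B (y - x)‖ ^ 2 / γ := h1
      _ ≤ ‖A‖ ^ 2 / γ * ‖y - x‖ ^ 2 := h2
  · -- Lipschitz
    apply LipschitzWith.of_dist_le_mul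
    intro x y
    rw [dist_eq_norm, dist_eq_norm]
    have hcoe : ((Real.toNNReal (‖A‖ ^ 2 / γ) : NNReal) : ℝ) = ‖A‖ ^ 2 / γ :=
      Real.coe_toNNReal _ (by positivity)
    rw [hcoe]
    have h1 : ‖A (ustar γ (B x)) - A (ustar γ (B y))‖ ≤ ‖A‖ * ‖ustar γ (B x) - ustar γ (B y)‖ := by
      rw [← map_sub]
      exact A.le_opNorm _
    have h2 : ‖ustar γ (B x) - ustar γ (B y)‖ ≤ ‖B x - B y‖ / γ := hulip (B x) (B y)
    have h3 : ‖B x - B y‖ ≤ ‖A‖ * ‖x - y‖ := by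
      rw [← map_sub]
      exact hBle (x - y)
    calc ‖A (ustar γ (B x)) - A (ustar γ (B y))‖
        ≤ ‖A‖ * ‖ustar γ (B x) - ustar γ (B y)‖ := h1
      _ ≤ ‖A‖ * (‖B x - B y‖ / γ) :=
          mul_le_mul_of_nonneg_left h2 (norm_nonneg A)
      _ ≤ ‖A‖ * (‖A‖ * ‖x - y‖ / γ) := by gcongr
      _ = ‖A‖ ^ 2 / γ * ‖x - y‖ := by ring
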